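/- For every natural number x ≥ 1, log(x!) = Σ_{n ≤ x} ψ(x/n), where ψ is the Chebyshev psi function. -/

import Mathlib

noncomputable def psi (x : ℝ) : ℝ :=
  ∑ n ∈ Finset.Icc 1 ⌊x⌋₊, ArithmeticFunction.vonMangoldt n

theorem log_factorial_eq_sum_psi (x : ℕ) (hx : 1 ≤ x) :
    Real.log (Nat.factorial x : ℝ) = ∑ n ∈ Finset.Icc 1 x, psi ((x : ℝ) / n) := by
  have hpsi : ∀ n ∈ Finset.Icc 1 x, psi ((x : ℝ) / n)
      = ∑ k ∈ Finset.Icc 1 (x / n), ArithmeticFunction.vonMangoldt k := by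
    intro n hn
    unfold psi
    rw [Nat.floor_div_natCast, Nat.floor_natCast]
  rw [Finset.sum_congr rfl hpsi]
  have hfac : Real.log (Nat.factorial x : ℝ) = ∑ m ∈ Finset.Icc 1 x, Real.log m := by
    rw [← Finset.prod_Ico_id_eq_factorial, ← Finset.Ico_add_one_right_eq_Icc]
    push_cast
    rw [Real.log_prod]
    intro m hm
    simp only [Finset.mem_Ico] at hm
    exact Nat.cast_ne_zero.mpr (by omega)
  rw [hfac]
  calc ∑ m ∈ Finset.Icc 1 x, Real.log m
      = ∑ m ∈ Finset.Icc 1 x, ∑ d ∈ m.divisors, ArithmeticFunction.vonMangoldt d :=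
        Finset.sum_congr rfl fun m _ => ArithmeticFunction.vonMangoldt_sum.symm
    _ = ∑ n ∈ Finset.Icc 1 x, ∑ k ∈ Finset.Icc 1 (x / n),
          ArithmeticFunction.vonMangoldt k := by
        rw [Finset.sum_sigma', Finset.sum_sigma']
        refine Finset.sum_nbij' (fun p => ⟨p.1 / p.2, p.2⟩) (fun p => ⟨p.1 * p.2, p.2⟩)
          ?_ ?_ ?_ ?_ ?_
        · rintro ⟨m, d⟩ hp
          simp only [Finset.mem_sigma, Finset.mem_Icc, Nat.mem_divisors] at hp ⊢
          obtain ⟨⟨hm1, hmx⟩, hdm, hm0⟩ := hp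
          have hd0 : 0 < d := Nat.pos_of_ne_zero fun h => hm0 (by simpa [h] using hdm)
          obtain ⟨c, rfl⟩ := hdm
          have hc0 : 0 < c := Nat.pos_of_ne_zero fun h => hm0 (by simp [h])
          rw [Nat.mul_div_cancel_left c hd0]
          refine ⟨⟨hc0, le_trans (Nat.le_mul_of_pos_left c hd0) hmx⟩, hd0, ?_⟩
          exact (Nat.le_div_iff_mul_le hc0).mpr hmx
        · rintro ⟨n, k⟩ hp
          simp only [Finset.mem_sigma, Finset.mem_Icc, Nat.mem_divisors] at hp ⊢
          obtain ⟨⟨hn1, hnx⟩, hk1, hkd⟩ := hp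
          have hnk : n * k ≤ x := by
            have := (Nat.le_div_iff_mul_le hn1).mp hkd
            rwa [mul_comm] at this
          exact ⟨⟨Nat.mul_pos hn1 hk1, hnk⟩, dvd_mul_left k n, Nat.pos_iff_ne_zero.mp (Nat.mul_pos hn1 hk1)⟩
        · rintro ⟨m, d⟩ hp
          simp only [Finset.mem_sigma, Finset.mem_Icc, Nat.mem_divisors] at hp
          obtain ⟨_, hdm, hm0⟩ := hp
          simp only [Sigma.mk.inj_iff]
          exact ⟨Nat.div_mul_cancel hdm, HEq.rfl⟩
        · rintro ⟨n, k⟩ hp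
          simp only [Finset.mem_sigma, Finset.mem_Icc] at hp
          simp only [Sigma.mk.inj_iff]
          exact ⟨Nat.mul_div_cancel_left n hp.2.1 ▸ (by rw [Nat.mul_div_cancel _ hp.2.1] : n * k / k = n), HEq.rfl⟩
        · rintro ⟨m, d⟩ _
          rfl
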